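/- For every real a ≥ 0, every integer n ≥ 1, all reals 0 ≤ α ≤ β and every x ≥ 0, the second moment of the Stancu-type operator is L_{n,a}^{α,β}(t²;x) = ((n²+n)/(n+β)²)·x² + (n(1+2α)/(n+β)²)·x + (a²/(n+β)²)·x²/(1+x)² + (2an/(n+β)²)·x²/(1+x) + (a(1+2α)/(n+β)²)·x/(1+x) + α²/(n+β)². -/

import Mathlib

open MeasureTheory Filter

/-- Rising factorial `(n)_i = n(n+1)⋯(n+i−1)`, with `(n)_0 = 1`. -/
noncomputable def risingFac (n i : ℕ) : ℝ := ∏ j ∈ Finset.range i, ((n : ℝ) + j)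

/-- `p_k(n,a) = Σ_{i=0}^{k} C(k,i)·(n)_i·a^{k−i}`. -/
noncomputable def pCoef (n : ℕ) (a : ℝ) (k : ℕ) : ℝ :=
  ∑ i ∈ Finset.range (k + 1), (Nat.choose k i : ℝ) * risingFac n i * a ^ (k - i)

/-- Generalized Baskakov basis function `W_{n,k}^a(x)`. -/
noncomputable def W (n : ℕ) (a : ℝ) (k : ℕ) (x : ℝ) : ℝ :=
  Real.exp (-(a * x) / (1 + x)) * (pCoef n a k / (Nat.factorial k : ℝ)) * x ^ k /
    (1 + x) ^ (k + n)

/-- Stancu-type operator `L_{n,a}^{α,β}(f;x) = Σ_k W_{n,k}^a(x) f((k+α)/(n+β))`. -/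
noncomputable def Lop (n : ℕ) (a α β : ℝ) (f : ℝ → ℝ) (x : ℝ) : ℝ :=
  ∑' k : ℕ, W n a k x * f (((k : ℝ) + α) / ((n : ℝ) + β))

/-- Generalized Baskakov–Kantorovich–Stancu operator `T_{n,a}^{α,β}(f;x)`. -/
noncomputable def TKS (n : ℕ) (a α β : ℝ) (f : ℝ → ℝ) (x : ℝ) : ℝ :=
  ((n : ℝ) + β) *
    ∑' k : ℕ, W n a k x *
      ∫ t in (((k : ℝ) + α) / ((n : ℝ) + β))..(((k : ℝ) + α + 1) / ((n : ℝ) + β)), f t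

lemma risingFac_succ' (n i : ℕ) : risingFac n (i + 1) = n * risingFac (n + 1) i := by
  unfold risingFac
  rw [Finset.prod_range_succ']
  push_cast
  rw [Finset.prod_congr rfl (fun j _ => by ring_nf :
    ∀ j ∈ Finset.range i, ((n : ℝ) + (j + 1)) = ((n : ℝ) + 1 + j))]
  ring

lemma risingFac_choose (p i : ℕ) :
    risingFac (p + 1) i = (Nat.factorial i : ℝ) * ((i + p).choose p) := by
  induction i with
  | zero => simp [risingFac]
  | succ i ih =>
    have h1 : risingFac (p+1) (i+1) = risingFac (p+1) i * ((p:ℝ) + 1 + i) := by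
      unfold risingFac; rw [Finset.prod_range_succ]; push_cast; ring
    have hnat : (i + p + 1) * ((i + p).choose p) = (i + 1) * ((i + 1 + p).choose p) := by
      have e1 : (i + p).choose p = (i + p).choose i := by
        rw [Nat.add_comm i p, Nat.choose_symm_add]
      have e2 : (i + 1 + p).choose p = (i + p + 1).choose (i + 1) := by
        rw [Nat.choose_symm_add.symm, Nat.add_right_comm]
      have h3 := Nat.add_one_mul_choose_eq (i + p) i
      rw [e1, e2, h3, Nat.mul_comm]
    rw [h1, ih]
    have : ((i + p + 1 : ℕ) : ℝ) * ((i + p).choose p : ℝ)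
        = ((i + 1 : ℕ) : ℝ) * ((i + 1 + p).choose p : ℝ) := by exact_mod_cast congrArg Nat.cast hnat
    push_cast at this ⊢
    rw [Nat.factorial_succ]
    push_cast
    nlinarith [this]

lemma hasSum_risingFac (m : ℕ) (hm : 1 ≤ m) {t : ℝ} (ht : |t| < 1) :
    HasSum (fun i => risingFac m i / (Nat.factorial i : ℝ) * t ^ i) (1 / (1 - t) ^ m) := by
  obtain ⟨p, rfl⟩ : ∃ p, m = p + 1 := ⟨m - 1, by omega⟩
  have h := hasSum_choose_mul_geometric_of_norm_lt_one (𝕜 := ℝ) p (r := t) (by simpa using ht)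
  refine HasSum.congr_fun h fun i => ?_
  rw [risingFac_choose]
  have : (Nat.factorial i : ℝ) ≠ 0 := Nat.cast_ne_zero.mpr (Nat.factorial_ne_zero i)
  field_simp

lemma hasSum_shift1 {f : ℕ → ℝ} {S : ℝ} (h : HasSum (fun j => f (j + 1)) S) (h0 : f 0 = 0) :
    HasSum f S := by
  have := (hasSum_nat_add_iff (f := f) 1).mp h
  simpa [h0] using this

lemma hasSum_shift2 {f : ℕ → ℝ} {S : ℝ} (h : HasSum (fun j => f (j + 2)) S) (h0 : f 0 = 0)
    (h1 : f 1 = 0) : HasSum f S := by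
  have := (hasSum_nat_add_iff (f := f) 2).mp h
  simpa [h0, h1, Finset.sum_range_succ] using this

lemma hasSum_cauchy {f g : ℕ → ℝ} {S T : ℝ} (hf : HasSum f S) (hg : HasSum g T) :
    HasSum (fun k => ∑ kl ∈ Finset.HasAntidiagonal.antidiagonal k, f kl.1 * g kl.2) (S * T) := by
  have hf' : Summable fun i => ‖f i‖ := by
    simpa [Real.norm_eq_abs, summable_abs_iff] using hf.summable
  have hg' : Summable fun i => ‖g i‖ := by
    simpa [Real.norm_eq_abs, summable_abs_iff] using hg.summable
  have hsum := (summable_norm_sum_mul_antidiagonal_of_summable_norm hf' hg').of_norm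
  rw [Summable.hasSum_iff hsum,
    ← tsum_mul_tsum_eq_tsum_sum_antidiagonal_of_summable_norm hf' hg', hf.tsum_eq, hg.tsum_eq]

set_option maxHeartbeats 1600000 in
theorem Lop_second_moment (a : ℝ) (ha : 0 ≤ a) (n : ℕ) (hn : 1 ≤ n) (α β : ℝ)
    (hα : 0 ≤ α) (hαβ : α ≤ β) (x : ℝ) (hx : 0 ≤ x) :
    Lop n a α β (fun t => t ^ 2) x =
      (((n : ℝ) ^ 2 + n) / ((n : ℝ) + β) ^ 2) * x ^ 2 +
        ((n : ℝ) * (1 + 2 * α) / ((n : ℝ) + β) ^ 2) * x +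
        (a ^ 2 / ((n : ℝ) + β) ^ 2) * (x ^ 2 / (1 + x) ^ 2) +
        (2 * a * n / ((n : ℝ) + β) ^ 2) * (x ^ 2 / (1 + x)) +
        (a * (1 + 2 * α) / ((n : ℝ) + β) ^ 2) * (x / (1 + x)) +
        α ^ 2 / ((n : ℝ) + β) ^ 2 := by
  have hx1 : (0:ℝ) < 1 + x := by linarith
  have hfac : ∀ m : ℕ, (Nat.factorial m : ℝ) ≠ 0 :=
    fun m => Nat.cast_ne_zero.mpr (Nat.factorial_ne_zero m)
  set t : ℝ := x / (1 + x) with htdef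
  have ht0 : 0 ≤ t := div_nonneg hx hx1.le
  have ht1 : t < 1 := by rw [htdef, div_lt_one hx1]; linarith
  have htabs : |t| < 1 := by rw [abs_of_nonneg ht0]; exact ht1
  have h1t : 1 - t = 1 / (1 + x) := by rw [htdef]; field_simp; ring
  have htx : t * (1 + x) = x := by rw [htdef]; field_simp
  set y : ℝ := a * t with hydef
  set E : ℝ := Real.exp (-(a * x) / (1 + x)) with hEdef
  have hEy : E = Real.exp (-y) := by
    rw [hEdef, hydef, htdef]; congr 1; ring
  have hgeom : ∀ m : ℕ, 1 / (1 - t) ^ m = (1 + x) ^ m := by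
    intro m; rw [h1t]; rw [div_pow, one_pow]; field_simp
  -- the P series (Poisson-type part)
  set P : ℕ → ℝ := fun j => E * (y ^ j / (Nat.factorial j : ℝ)) with hPdef
  have hexp : HasSum (fun j => y ^ j / (Nat.factorial j : ℝ)) (Real.exp y) := by
    rw [Real.exp_eq_exp_ℝ]; exact NormedSpace.expSeries_div_hasSum_exp y
  have hP0 : HasSum P 1 := by
    have h := hexp.mul_left E
    have : E * Real.exp y = 1 := by rw [hEy, ← Real.exp_add]; simp
    rwa [this] at h
  have hP1 : HasSum (fun (j : ℕ) => (j : ℝ) * P j) y := by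
    apply hasSum_shift1
    · have h := hP0.mul_left y
      rw [show y * 1 = y from mul_one y] at h
      refine HasSum.congr_fun h fun j => ?_
      rw [hPdef]
      simp only
      rw [Nat.factorial_succ]
      push_cast
      field_simp
      ring
    · simp
  have hP2 : HasSum (fun (j : ℕ) => (j : ℝ) * ((j : ℝ) - 1) * P j) (y ^ 2) := by
    apply hasSum_shift2
    · have h := hP0.mul_left (y ^ 2)
      rw [mul_one] at h
      refine HasSum.congr_fun h fun j => ?_
      rw [hPdef]
      simp only
      rw [show j + 2 = (j + 1) + 1 from rfl, Nat.factorial_succ, Nat.factorial_succ]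
      push_cast
      field_simp
      ring
    · simp
    · simp
  -- the Q series (negative binomial part)
  set Q : ℕ → ℝ := fun i => risingFac n i / (Nat.factorial i : ℝ) * t ^ i / (1 + x) ^ n
    with hQdef
  have hQ0 : HasSum Q 1 := by
    have h := (hasSum_risingFac n hn htabs).div_const ((1 + x) ^ n)
    rw [hgeom n, div_self (by positivity)] at h
    exact h
  have hQ1 : HasSum (fun (i : ℕ) => (i : ℝ) * Q i) ((n : ℝ) * x) := by
    apply hasSum_shift1
    · have h := (((hasSum_risingFac (n + 1) (by omega) htabs).div_const
        ((1 + x) ^ n)).mul_left ((n : ℝ) * t))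
      rw [hgeom (n + 1)] at h
      have hv : (n : ℝ) * t * ((1 + x) ^ (n + 1) / (1 + x) ^ n) = (n : ℝ) * x := by
        have hq : ((1:ℝ) + x) ^ (n + 1) / (1 + x) ^ n = 1 + x := by
          rw [pow_succ, mul_comm, mul_div_assoc,
            div_self (by positivity : ((1:ℝ) + x) ^ n ≠ 0), mul_one]
        rw [hq, mul_assoc, htx]
      rw [hv] at h
      refine HasSum.congr_fun h fun i => ?_
      rw [hQdef]
      simp only
      rw [risingFac_succ', Nat.factorial_succ, pow_succ]
      push_cast
      field_simp
    · simp
  have hQ2 : HasSum (fun (i : ℕ) => (i : ℝ) * ((i : ℝ) - 1) * Q i) ((n : ℝ) * ((n : ℝ) + 1) * x ^ 2) := by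
    apply hasSum_shift2
    · have h := (((hasSum_risingFac (n + 2) (by omega) htabs).div_const
        ((1 + x) ^ n)).mul_left ((n : ℝ) * ((n : ℝ) + 1) * t ^ 2))
      rw [hgeom (n + 2)] at h
      have hv : (n : ℝ) * ((n : ℝ) + 1) * t ^ 2 * ((1 + x) ^ (n + 2) / (1 + x) ^ n)
          = (n : ℝ) * ((n : ℝ) + 1) * x ^ 2 := by
        have h2 : ((1 + x) ^ (n + 2) / (1 + x) ^ n) = (1 + x) ^ 2 := by
          rw [pow_add, mul_comm ((1+x)^n) _, mul_div_assoc, div_self (by positivity), mul_one]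
        rw [h2]
        have : t ^ 2 * (1 + x) ^ 2 = x ^ 2 := by rw [← mul_pow, htx]
        rw [mul_assoc, this]
      rw [hv] at h
      refine HasSum.congr_fun h fun i => ?_
      rw [hQdef]
      simp only
      rw [show i + 2 = (i + 1) + 1 from rfl, risingFac_succ', risingFac_succ',
        Nat.factorial_succ, Nat.factorial_succ, pow_succ, pow_succ]
      push_cast
      field_simp
      ring
    · simp
    · simp
  -- Cauchy product decomposition of W
  have key : ∀ k, W n a k x = ∑ kl ∈ Finset.HasAntidiagonal.antidiagonal k, Q kl.1 * P kl.2 := by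
    intro k
    rw [Finset.Nat.sum_antidiagonal_eq_sum_range_succ_mk]
    rw [W, pCoef, Finset.sum_div, Finset.mul_sum, Finset.sum_mul, Finset.sum_div]
    refine Finset.sum_congr rfl fun i hi => ?_
    have hik : i ≤ k := by
      have := Finset.mem_range.mp hi; omega
    obtain ⟨j, rfl⟩ : ∃ j, k = i + j := ⟨k - i, by omega⟩
    rw [Nat.cast_choose ℝ (Nat.le_add_right i j)]
    simp only [Nat.add_sub_cancel_left]
    rw [hQdef, hPdef, hydef, htdef]
    simp only
    rw [← hEdef]
    have hE0 : E ≠ 0 := by rw [hEy]; exact (Real.exp_pos _).ne'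
    have hx0 : (1 + x) ≠ 0 := hx1.ne'
    field_simp
    rw [div_pow, div_pow, pow_add, pow_add]
    field_simp
    ring
  -- the three moment sums
  have hW0 : HasSum (fun k => W n a k x) 1 := by
    have h := hasSum_cauchy hQ0 hP0
    rw [mul_one] at h
    exact (funext key : (fun k => W n a k x) = _) ▸ h
  have hW1 : HasSum (fun (k : ℕ) => (k : ℝ) * W n a k x) ((n : ℝ) * x + y) := by
    have h1 := hasSum_cauchy hQ1 hP0
    have h2 := hasSum_cauchy hQ0 hP1
    rw [mul_one] at h1
    rw [one_mul] at h2
    have h := h1.add h2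
    refine HasSum.congr_fun h fun k => ?_
    rw [key, Finset.mul_sum, ← Finset.sum_add_distrib]
    refine Finset.sum_congr rfl fun kl hkl => ?_
    have hk : kl.1 + kl.2 = k := Finset.HasAntidiagonal.mem_antidiagonal.mp hkl
    have hkc : (k : ℝ) = (kl.1 : ℝ) + (kl.2 : ℝ) := by exact_mod_cast hk.symm
    rw [hkc]; ring
  have hW2 : HasSum (fun (k : ℕ) => (k : ℝ) * ((k : ℝ) - 1) * W n a k x)
      ((n : ℝ) * ((n : ℝ) + 1) * x ^ 2 + y ^ 2 + 2 * ((n : ℝ) * x * y)) := by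
    have h1 := hasSum_cauchy hQ2 hP0
    have h2 := hasSum_cauchy hQ0 hP2
    have h3 := (hasSum_cauchy hQ1 hP1).mul_left 2
    rw [mul_one] at h1
    rw [one_mul] at h2
    have h := (h1.add h2).add h3
    refine HasSum.congr_fun h fun k => ?_
    rw [key, Finset.mul_sum, Finset.mul_sum, ← Finset.sum_add_distrib, ← Finset.sum_add_distrib]
    refine Finset.sum_congr rfl fun kl hkl => ?_
    have hk : kl.1 + kl.2 = k := Finset.HasAntidiagonal.mem_antidiagonal.mp hkl
    have hkc : (k : ℝ) = (kl.1 : ℝ) + (kl.2 : ℝ) := by exact_mod_cast hk.symm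
    rw [hkc]; ring
  -- assemble
  have hn1 : (1 : ℝ) ≤ (n : ℝ) := by exact_mod_cast hn
  have hs : (0 : ℝ) < (n : ℝ) + β := by linarith
  have hfin := ((hW2.add (hW1.mul_left (1 + 2 * α))).add (hW0.mul_left (α ^ 2))).div_const
    (((n : ℝ) + β) ^ 2)
  rw [Lop]
  have hpt2 : ∀ k : ℕ, W n a k x * (fun t => t ^ 2) (((k : ℝ) + α) / ((n : ℝ) + β)) =
      ((k : ℝ) * ((k : ℝ) - 1) * W n a k x + (1 + 2 * α) * ((k : ℝ) * W n a k x) +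
        α ^ 2 * W n a k x) / ((n : ℝ) + β) ^ 2 := by
    intro k
    simp only
    field_simp
    ring
  rw [tsum_congr hpt2, hfin.tsum_eq, hydef, htdef]
  field_simp
  ring
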